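/- Σ_{k=1}^∞ Π_{i=1}^k a_i < ∞. -/

import Mathlib

open Finset Real

/-- End of Example "pezzoforte": for `α ∈ (1,2)` and `c > 0` with
`c·Σ_{i=1}^∞ i^{−α} < 1`, the sequence `a_k = 1 − c·Σ_{i=k+1}^∞ i^{−α}` (so `0 < a_k < 1`)
satisfies `Σ_{k=1}^∞ Π_{i=1}^k a_i < ∞`. -/
theorem stmt14 (α c : ℝ) (hα : α ∈ Set.Ioo (1 : ℝ) 2) (hc : 0 < c)
    (hsmall : c * (∑' i : ℕ, ((i : ℝ) + 1) ^ (-α)) < 1)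
    (a : ℕ → ℝ)
    (ha : ∀ k : ℕ, 1 ≤ k → a k = 1 - c * ∑' j : ℕ, ((j : ℝ) + (k : ℝ) + 1) ^ (-α)) :
    Summable (fun k : ℕ => ∏ i ∈ Finset.Icc 1 k, a i) := by
  obtain ⟨hα1, hα2⟩ := hα
  have hβ : (0:ℝ) < 2 - α := by linarith
  -- summability of the tails
  have hbase : Summable (fun j : ℕ => ((j:ℝ)+1)^(-α)) := by
    have h := (Real.summable_nat_rpow (p := -α)).2 (by linarith)
    have h2 := (summable_nat_add_iff 1).2 h
    convert h2 using 2 with j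
    · rfl
    push_cast
    ring_nf
  have hsummT : ∀ k : ℕ, Summable (fun j : ℕ => ((j:ℝ)+(k:ℝ)+1)^(-α)) := by
    intro k
    refine hbase.of_nonneg_of_le (fun j => Real.rpow_nonneg (by positivity) _) (fun j => ?_)
    refine Real.rpow_le_rpow_of_nonpos (by positivity) ?_ (by linarith)
    have : (0:ℝ) ≤ (k:ℝ) := Nat.cast_nonneg k
    linarith
  set T : ℕ → ℝ := fun k => ∑' j : ℕ, ((j:ℝ)+(k:ℝ)+1)^(-α) with hT
  have hTpos : ∀ k, 0 < T k := fun k =>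
    Summable.tsum_pos (hsummT k) (fun j => Real.rpow_nonneg (by positivity) _) 0
      (Real.rpow_pos_of_pos (by positivity) _)
  have hTle : ∀ k, T k ≤ ∑' i : ℕ, ((i : ℝ) + 1) ^ (-α) := by
    intro k
    refine Summable.tsum_le_tsum (fun j => ?_) (hsummT k) hbase
    refine Real.rpow_le_rpow_of_nonpos (by positivity) ?_ (by linarith)
    have : (0:ℝ) ≤ (k:ℝ) := Nat.cast_nonneg k
    linarith
  have hSpos : 0 ≤ ∑' i : ℕ, ((i : ℝ) + 1) ^ (-α) :=
    tsum_nonneg fun i => Real.rpow_nonneg (by positivity) _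
  have ha_pos : ∀ k : ℕ, 1 ≤ k → 0 < a k := by
    intro k hk
    rw [ha k hk]
    have h1 : c * T k ≤ c * ∑' i : ℕ, ((i : ℝ) + 1) ^ (-α) :=
      mul_le_mul_of_nonneg_left (hTle k) hc.le
    simp only [hT] at h1 ⊢
    linarith
  have ha_exp : ∀ k : ℕ, 1 ≤ k → a k ≤ Real.exp (-(c * T k)) := by
    intro k hk
    rw [ha k hk]
    have := Real.add_one_le_exp (-(c * T k))
    simp only [hT] at this ⊢
    linarith
  -- lower bound on the tail T k for k ≥ 1
  have hTlow : ∀ k : ℕ, 1 ≤ k → (2:ℝ)^(-α) * (k:ℝ)^(1-α) ≤ T k := by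
    intro k hk
    have hk0 : (0:ℝ) < (k:ℝ) := by exact_mod_cast hk
    have hsum : ∑ j ∈ Finset.range k, ((j:ℝ)+(k:ℝ)+1)^(-α) ≤ T k :=
      Summable.sum_le_tsum _ (fun j _ => Real.rpow_nonneg (by positivity) _) (hsummT k)
    have hterm : ∀ j ∈ Finset.range k, ((2:ℝ)*k)^(-α) ≤ ((j:ℝ)+(k:ℝ)+1)^(-α) := by
      intro j hj
      have hj' : (j:ℝ) + 1 ≤ (k:ℝ) := by
        have := Finset.mem_range.1 hj
        exact_mod_cast Nat.succ_le_of_lt this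
      refine Real.rpow_le_rpow_of_nonpos (by positivity) (by linarith) (by linarith)
    have h2 : (k:ℝ) * ((2:ℝ)*k)^(-α) ≤ ∑ j ∈ Finset.range k, ((j:ℝ)+(k:ℝ)+1)^(-α) := by
      calc (k:ℝ) * ((2:ℝ)*k)^(-α) = ∑ _j ∈ Finset.range k, ((2:ℝ)*k)^(-α) := by
            rw [Finset.sum_const, Finset.card_range, nsmul_eq_mul]
        _ ≤ _ := Finset.sum_le_sum hterm
    have hmul : ((2:ℝ)*k)^(-α) = (2:ℝ)^(-α) * (k:ℝ)^(-α) :=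
      Real.mul_rpow (by norm_num) hk0.le
    have hpow : (k:ℝ) * (k:ℝ)^(-α) = (k:ℝ)^(1-α) := by
      rw [sub_eq_add_neg, Real.rpow_add hk0, Real.rpow_one]
    calc (2:ℝ)^(-α) * (k:ℝ)^(1-α) = (k:ℝ) * ((2:ℝ)*k)^(-α) := by
          rw [hmul, ← hpow]; ring
      _ ≤ _ := le_trans h2 hsum
  -- bound the product
  set d : ℝ := c * (2:ℝ)^(-α) with hd
  have hdpos : 0 < d := mul_pos hc (Real.rpow_pos_of_pos (by norm_num) _)
  have hprod : ∀ k : ℕ, (∏ i ∈ Finset.Icc 1 k, a i) ≤ Real.exp (-(d * (k:ℝ)^(2-α))) := by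
    intro k
    rcases Nat.eq_zero_or_pos k with rfl | hk
    · simp [Real.zero_rpow hβ.ne']
    have hk0 : (0:ℝ) < (k:ℝ) := by exact_mod_cast hk
    have step1 : (∏ i ∈ Finset.Icc 1 k, a i) ≤ ∏ i ∈ Finset.Icc 1 k, Real.exp (-(c * T i)) := by
      refine Finset.prod_le_prod (fun i hi => (ha_pos i (Finset.mem_Icc.1 hi).1).le)
        (fun i hi => ha_exp i (Finset.mem_Icc.1 hi).1)
    have step2 : (∏ i ∈ Finset.Icc 1 k, Real.exp (-(c * T i)))
        = Real.exp (∑ i ∈ Finset.Icc 1 k, -(c * T i)) := (Real.exp_sum _ _).symm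
    have step3 : ∑ i ∈ Finset.Icc 1 k, -(c * T i) ≤ -(d * (k:ℝ)^(2-α)) := by
      have hle : ∀ i ∈ Finset.Icc 1 k, c * ((2:ℝ)^(-α) * (k:ℝ)^(1-α)) ≤ c * T i := by
        intro i hi
        obtain ⟨hi1, hik⟩ := Finset.mem_Icc.1 hi
        have hi0 : (0:ℝ) < (i:ℝ) := by exact_mod_cast hi1
        have hik' : (i:ℝ) ≤ (k:ℝ) := by exact_mod_cast hik
        have hmono : (k:ℝ)^(1-α) ≤ (i:ℝ)^(1-α) :=
          Real.rpow_le_rpow_of_nonpos hi0 hik' (by linarith)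
        have := hTlow i hi1
        have h2 : (2:ℝ)^(-α) * (k:ℝ)^(1-α) ≤ (2:ℝ)^(-α) * (i:ℝ)^(1-α) :=
          mul_le_mul_of_nonneg_left hmono (Real.rpow_nonneg (by norm_num) _)
        exact mul_le_mul_of_nonneg_left (le_trans h2 this) hc.le
      have hsum2 : (k:ℝ) * (c * ((2:ℝ)^(-α) * (k:ℝ)^(1-α)))
          ≤ ∑ i ∈ Finset.Icc 1 k, c * T i := by
        calc (k:ℝ) * (c * ((2:ℝ)^(-α) * (k:ℝ)^(1-α)))
            = ∑ _i ∈ Finset.Icc 1 k, c * ((2:ℝ)^(-α) * (k:ℝ)^(1-α)) := by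
              rw [Finset.sum_const, Nat.card_Icc, nsmul_eq_mul]
              simp
          _ ≤ _ := Finset.sum_le_sum hle
      have hpow2 : (k:ℝ) * (k:ℝ)^(1-α) = (k:ℝ)^(2-α) := by
        rw [show (2:ℝ) - α = 1 + (1-α) by ring, Real.rpow_add hk0, Real.rpow_one]
      have : d * (k:ℝ)^(2-α) ≤ ∑ i ∈ Finset.Icc 1 k, c * T i := by
        calc d * (k:ℝ)^(2-α) = (k:ℝ) * (c * ((2:ℝ)^(-α) * (k:ℝ)^(1-α))) := by
              rw [hd, ← hpow2]; ring
          _ ≤ _ := hsum2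
      have hsumneg : ∑ i ∈ Finset.Icc 1 k, -(c * T i) = -∑ i ∈ Finset.Icc 1 k, c * T i := by
        rw [Finset.sum_neg_distrib]
      rw [hsumneg]
      linarith
    calc (∏ i ∈ Finset.Icc 1 k, a i) ≤ _ := step1
      _ = _ := step2
      _ ≤ _ := Real.exp_le_exp.2 step3
  -- summability of the dominating sequence
  have hgsum : Summable (fun k : ℕ => Real.exp (-(d * (k:ℝ)^(2-α)))) := by
    set m : ℕ := ⌈2/(2-α)⌉₊ with hm
    have hmβ : 2 ≤ (m:ℝ) * (2-α) := by
      have h1 : 2/(2-α) ≤ (m:ℝ) := Nat.le_ceil _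
      calc (2:ℝ) = (2/(2-α)) * (2-α) := by field_simp
        _ ≤ (m:ℝ) * (2-α) := by exact mul_le_mul_of_nonneg_right h1 hβ.le
    set C : ℝ := (m.factorial : ℝ) / d^m with hC
    have hCpos : 0 < C := by positivity
    have hbound : ∀ y : ℝ, 1 ≤ y →
        Real.exp (-(d * y^(2-α))) ≤ C * y^(-((2-α) * m)) := by
      intro y hy
      have hy0 : (0:ℝ) < y := by linarith
      set x : ℝ := d * y^(2-α) with hx
      have hxpos : 0 < x := mul_pos hdpos (Real.rpow_pos_of_pos hy0 _)
      have hmain : x^m / (m.factorial : ℝ) ≤ Real.exp x := by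
        calc x^m / (m.factorial : ℝ)
            ≤ ∑ i ∈ Finset.range (m+1), x^i / (i.factorial : ℝ) := by
              refine Finset.single_le_sum (f := fun i => x^i / (i.factorial : ℝ))
                (fun i _ => by positivity) (Finset.self_mem_range_succ m)
          _ ≤ Real.exp x := Real.sum_le_exp_of_nonneg hxpos.le _
      have hxm : 0 < x^m / (m.factorial : ℝ) := by positivity
      have hexp : Real.exp (-x) ≤ (m.factorial : ℝ) / x^m := by
        rw [Real.exp_neg]
        calc (Real.exp x)⁻¹ ≤ (x^m / (m.factorial : ℝ))⁻¹ :=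
              inv_anti₀ hxm hmain
          _ = (m.factorial : ℝ) / x^m := by
              rw [inv_div]
      have hxmsplit : x^m = d^m * (y^(2-α))^m := by
        rw [hx, mul_pow]
      have hypow : y^(-((2-α) * (m:ℝ))) = ((y^(2-α))^m)⁻¹ := by
        rw [Real.rpow_neg hy0.le, Real.rpow_mul hy0.le, Real.rpow_natCast]
      calc Real.exp (-(d * y^(2-α))) = Real.exp (-x) := by rw [hx]
        _ ≤ (m.factorial : ℝ) / x^m := hexp
        _ = C * y^(-((2-α) * (m:ℝ))) := by
            rw [hxmsplit, hypow, hC]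
            field_simp
    -- compare with a summable p-series
    have hp : Summable (fun k : ℕ => C * ((k:ℝ)+1)^(-((2-α) * (m:ℝ)))) := by
      have h1 : Summable (fun n : ℕ => (n:ℝ)^(-((2-α) * (m:ℝ)))) :=
        (Real.summable_nat_rpow).2 (by linarith)
      have h2 := (summable_nat_add_iff 1).2 h1
      have h3 : Summable (fun k : ℕ => ((k:ℝ)+1)^(-((2-α) * (m:ℝ)))) := by
        convert h2 using 2 with j
        · rfl
        push_cast
        ring_nf
      exact h3.mul_left C
    have hshift : Summable (fun k : ℕ => Real.exp (-(d * ((k:ℝ)+1)^(2-α)))) := by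
      refine Summable.of_nonneg_of_le (fun k => (Real.exp_pos _).le)
        (fun k => hbound ((k:ℝ)+1) (by
          have := Nat.cast_nonneg (α := ℝ) k
          linarith)) hp
    refine (summable_nat_add_iff 1).1 ?_
    convert hshift using 2 with k
    · rfl
    push_cast
    ring_nf
  refine Summable.of_nonneg_of_le (fun k => ?_) (fun k => hprod k) hgsum
  refine Finset.prod_nonneg (fun i hi => (ha_pos i (Finset.mem_Icc.1 hi).1).le)
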